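/- arXiv:1405.6193 — 6 statements merged into one kernel-verified Lean document; each statement's English description precedes it below -/
import Mathlib

section
/- For every real α ≠ 0 and every x ≥ 0, α·φ(x)² - 2(1 + αx)·φ(x) + 2x ≤ 0. -/
theorem stmt_3 (α : ℝ) (hα : α ≠ 0)
    (φ : ℝ → ℝ) (hφ : ∀ x, φ x = (Real.exp (-α * x) - 1) / (-α)) :
    ∀ x : ℝ, 0 ≤ x → α * (φ x) ^ 2 - 2 * (1 + α * x) * φ x + 2 * x ≤ 0 := by
  have key : ∀ t : ℝ, 0 ≤ t → 2 * t ≤ Real.exp t - Real.exp (-t) := by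
    intro t ht
    have h := Real.self_le_sinh_iff.mpr ht
    rw [Real.sinh_eq] at h
    linarith
  intro x hx
  set E : ℝ := Real.exp (-α * x) with hEdef
  set P : ℝ := Real.exp (α * x) with hPdef
  have hEpos : 0 < E := Real.exp_pos _
  have hEP : E * P = 1 := by
    rw [hEdef, hPdef, ← Real.exp_add]
    norm_num
  have h1 : α * φ x = 1 - E := by
    rw [hφ x, show Real.exp (-α * x) = E from rfl, div_neg, mul_neg, mul_div_assoc',
      mul_comm, mul_div_assoc, div_self hα]
    ring
  have hAg : α * (α * (φ x) ^ 2 - 2 * (1 + α * x) * φ x + 2 * x)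
      = E ^ 2 - 1 + 2 * (α * x) * E := by
    linear_combination (α * φ x + (1 - E) - 2 * (1 + α * x)) * h1
  have hconv : Real.exp (-(α * x)) = E := by rw [hEdef, neg_mul]
  rcases lt_or_gt_of_ne hα with hneg | hpos
  · -- α < 0 : numerator ≥ 0
    have ht : 0 ≤ -(α * x) := by nlinarith
    have hk := key _ ht
    rw [neg_neg, hconv] at hk
    -- hk : 2 * -(α*x) ≤ E - P
    have hnum : 0 ≤ E ^ 2 - 1 + 2 * (α * x) * E := by
      nlinarith [mul_nonneg hEpos.le (show (0:ℝ) ≤ E + 2 * (α * x) - P by linarith)]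
    by_contra h
    push_neg at h
    have := mul_neg_of_neg_of_pos hneg h
    linarith [hAg ▸ hnum]
  · -- α > 0 : numerator ≤ 0
    have ht : 0 ≤ α * x := mul_nonneg hpos.le hx
    have hk := key _ ht
    rw [hconv] at hk
    -- hk : 2 * (α*x) ≤ P - E
    have hnum : E ^ 2 - 1 + 2 * (α * x) * E ≤ 0 := by
      nlinarith [mul_nonneg hEpos.le (show (0:ℝ) ≤ P - E - 2 * (α * x) by linarith)]
    have hαg : α * (α * (φ x) ^ 2 - 2 * (1 + α * x) * φ x + 2 * x) ≤ α * 0 := by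
      rw [hAg, mul_zero]; exact hnum
    exact le_of_mul_le_mul_left hαg hpos
end

section
/- Let M : (0,∞) → ℝ be positive with positive derivative, α ∈ ℝ, φ(x) = (e^{-αx}-1)/(-α), A(x) = (φ(x)-x)/φ(x)², B(x) = (1-αx) + x·M'(x)/M(x), C(x) = x·e^{-αx}. Then B(x)² - 4A(x)C(x) > 0 for all x > 0. -/
theorem stmt_14 (α : ℝ) (hα : α ≠ 0)
    (M M' : ℝ → ℝ)
    (hMpos : ∀ x : ℝ, 0 < x → 0 < M x)
    (hM'pos : ∀ x : ℝ, 0 < x → 0 < M' x)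
    (hM : ∀ x : ℝ, 0 < x → HasDerivAt M (M' x) x)
    (φ A B C : ℝ → ℝ)
    (hφ : ∀ x, φ x = (Real.exp (-α * x) - 1) / (-α))
    (hA : ∀ x, A x = (φ x - x) / (φ x) ^ 2)
    (hB : ∀ x, B x = (1 - α * x) + x * M' x / M x)
    (hC : ∀ x, C x = x * Real.exp (-α * x)) :
    ∀ x : ℝ, 0 < x → 0 < (B x) ^ 2 - 4 * A x * C x := by
  intro x hx
  have hEpos : 0 < Real.exp (-α * x) := Real.exp_pos _
  have hne0 : -α * x ≠ 0 := mul_ne_zero (neg_ne_zero.mpr hα) hx.ne'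
  have h1 : -α * x + 1 < Real.exp (-α * x) := Real.add_one_lt_exp hne0
  have hEne : Real.exp (-α * x) - 1 ≠ 0 := by
    intro h
    have h1' : Real.exp (-α * x) = 1 := by linarith
    exact hne0 (by simpa using h1')
  have hD : 0 < (Real.exp (-α * x) - 1) ^ 2 :=
    lt_of_le_of_ne (sq_nonneg _) (Ne.symm (pow_ne_zero 2 hEne))
  have hαne : -α ≠ 0 := neg_ne_zero.mpr hα
  have hkey : A x * C x * (Real.exp (-α * x) - 1) ^ 2
      = (α * x) * Real.exp (-α * x) * (1 - Real.exp (-α * x) - α * x) := by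
    have hφne : φ x ≠ 0 := by rw [hφ]; exact div_ne_zero hEne hαne
    rw [hA, hC]
    rw [div_mul_eq_mul_div, div_mul_eq_mul_div, div_eq_iff (pow_ne_zero 2 hφne)]
    rw [hφ]
    field_simp [hα]
    ring
  have hu : 1 - Real.exp (-α * x) - α * x < 0 := by linarith
  -- it suffices to show positivity after multiplying by (E-1)^2 > 0
  have hsuff : 0 < ((B x) ^ 2 - 4 * A x * C x) * (Real.exp (-α * x) - 1) ^ 2 → 0 < (B x) ^ 2 - 4 * A x * C x := by
    intro h
    by_contra h'
    push_neg at h'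
    nlinarith
  apply hsuff
  have hexp : ((B x) ^ 2 - 4 * A x * C x) * (Real.exp (-α * x) - 1) ^ 2
      = (B x) ^ 2 * (Real.exp (-α * x) - 1) ^ 2
        - 4 * ((α * x) * Real.exp (-α * x) * (1 - Real.exp (-α * x) - α * x)) := by
    rw [← hkey]; ring
  rw [hexp]
  rcases lt_or_gt_of_ne (hα) with hαneg | hαpos
  · -- α < 0, so t = α x < 0 and B x > 1 - α x > 0
    have ht : α * x < 0 := mul_neg_of_neg_of_pos hαneg hx
    have hs : 0 < x * M' x / M x :=
      div_pos (mul_pos hx (hM'pos x hx)) (hMpos x hx)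
    have hBgt : 1 - α * x < B x := by rw [hB]; linarith
    have h1t : 0 < 1 - α * x := by linarith
    have hB2 : (1 - α * x) ^ 2 < (B x) ^ 2 := by nlinarith
    nlinarith [mul_lt_mul_of_pos_right hB2 hD,
      sq_nonneg (1 - Real.exp (-α * x) - α * x - α * x * Real.exp (-α * x))]
  · -- α > 0, so t = α x > 0 and 4AC < 0
    have ht : 0 < α * x := mul_pos hαpos hx
    nlinarith [sq_nonneg (B x), mul_pos ht hEpos]
end

section
/- For α ≤ 0 and x ≥ 0, the inequality 2x - (1+αx)φ(x) ≥ φ(x) - x holds, hence (1-αx) + |1 + αx - 2x/φ(x)| ≥ 2(φ(x)-x)/φ(x) for x > 0; consequently (B(x) + √(B(x)²-4A(x)C(x)))/(2A(x)) ≥ φ(x) whenever A(x) > 0 and B(x) ≥ 1 - αx. -/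
theorem stmt_16 (α : ℝ) (hα : α < 0)
    (φ A C : ℝ → ℝ)
    (hφ : ∀ x, φ x = (Real.exp (-α * x) - 1) / (-α))
    (hA : ∀ x, A x = (φ x - x) / (φ x) ^ 2)
    (hC : ∀ x, C x = x * Real.exp (-α * x))
    (x : ℝ) (hx : 0 < x) (B : ℝ) (hB : 1 - α * x ≤ B) :
    (φ x - x ≤ 2 * x - (1 + α * x) * φ x) ∧
    (2 * (φ x - x) / φ x ≤ (1 - α * x) + |1 + α * x - 2 * x / φ x|) ∧
    (0 < A x →
      φ x ≤ (B + Real.sqrt (B ^ 2 - 4 * A x * C x)) / (2 * A x)) := by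
  have ht : 0 < -α := by linarith
  set t : ℝ := -α with htdef
  set u : ℝ := t * x with hudef
  have hu : 0 < u := mul_pos ht hx
  set E : ℝ := Real.exp u with hEdef
  have hE1 : 1 < E := by
    rw [hEdef, show (1:ℝ) = Real.exp 0 by simp]
    exact Real.exp_lt_exp.mpr hu
  have hφx : φ x = (E - 1) / t := by rw [hφ x]
  have hφpos : 0 < φ x := by rw [hφx]; exact div_pos (by linarith) ht
  -- key inequality : (2 - u) * E ≤ 2 * u + 2
  have key : (2 - u) * E ≤ 2 * u + 2 := by
    rcases le_or_gt 2 u with h2 | h2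
    · nlinarith [hE1]
    · -- u < 2
      set s : ℝ := Real.exp (u / 3) with hsdef
      have hs : 0 < s := Real.exp_pos _
      have hc : 0 < 1 - u / 3 := by linarith
      have hbase : (1 - u / 3) * s ≤ 1 := by
        have h := Real.add_one_le_exp (-(u / 3))
        have h2' : (-(u / 3) + 1) * s ≤ Real.exp (-(u / 3)) * s :=
          mul_le_mul_of_nonneg_right h hs.le
        rw [hsdef, ← Real.exp_add] at h2'
        simp at h2'
        linarith [h2']
      have hEs : E = s ^ 3 := by
        rw [hEdef, hsdef, ← Real.exp_nat_mul]
        congr 1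
        push_cast
        ring
      have hcube : ((1 - u / 3) * s) ^ 3 ≤ 1 := by
        calc ((1 - u / 3) * s) ^ 3 ≤ 1 ^ 3 :=
              pow_le_pow_left₀ (by positivity) hbase 3
          _ = 1 := by norm_num
      have hcs : (1 - u / 3) ^ 3 * s ^ 3 ≤ 1 := by rw [← mul_pow]; exact hcube
      have hpoly : (2 - u) ≤ (2 * u + 2) * (1 - u / 3) ^ 3 := by
        nlinarith [mul_nonneg (mul_nonneg hu.le hu.le) (by linarith : (0:ℝ) ≤ 2 - u),
          mul_nonneg hu.le (sq_nonneg (u - 3 / 2))]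
      rw [hEs]
      nlinarith [pow_pos hs 3, pow_pos hc 3,
        mul_le_mul_of_nonneg_left hcs (by linarith : (0:ℝ) ≤ 2 - u),
        mul_pos (pow_pos hc 3) (pow_pos hs 3)]
  -- Part 1
  have hmain : (2 + α * x) * φ x ≤ 3 * x := by
    have hαx : α * x = -u := by rw [hudef]; ring
    rw [hφx, hαx, ← mul_div_assoc, div_le_iff₀ ht]
    have hx3 : 3 * x * t = 3 * u := by rw [hudef]; ring
    rw [hx3]
    nlinarith [key]
  have part1 : φ x - x ≤ 2 * x - (1 + α * x) * φ x := by
    have e : 2 * x - (1 + α * x) * φ x - (φ x - x) = 3 * x - (2 + α * x) * φ x := by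
      ring
    linarith [hmain]
  refine ⟨part1, ?_, ?_⟩
  · -- Part 2
    have hrw : 2 * x / φ x - (1 + α * x) = (2 * x - (1 + α * x) * φ x) / φ x := by
      field_simp
    have ha : (φ x - x) / φ x ≤ 2 * x / φ x - (1 + α * x) := by
      rw [hrw]; gcongr
    have hb : (φ x - x) / φ x ≤ 1 - α * x := by
      have h1 : (φ x - x) / φ x = 1 - x / φ x := by field_simp
      have h2 : 0 < x / φ x := div_pos hx hφpos
      have h3 : α * x < 0 := mul_neg_of_neg_of_pos hα hx
      linarith
    have habs : -(1 + α * x - 2 * x / φ x) ≤ |1 + α * x - 2 * x / φ x| :=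
      neg_le_abs _
    have hsplit : 2 * (φ x - x) / φ x = (φ x - x) / φ x + (φ x - x) / φ x := by
      ring
    rw [hsplit]
    linarith [ha, hb, habs]
  · -- Part 3
    intro hApos
    have hφne : φ x ≠ 0 := ne_of_gt hφpos
    have hAφ2 : A x * φ x ^ 2 = φ x - x := by
      rw [hA x]; field_simp
    have hCx : C x = x * E := by rw [hC x]
    have hEφ : E - 1 = t * φ x := by
      rw [hφx]; field_simp
    have key3 : A x * φ x ^ 2 - B * φ x + C x ≤ 0 := by
      have h1 : A x * φ x ^ 2 - B * φ x + C x = φ x * ((1 + t * x) - B) := by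
        rw [hAφ2, hCx]
        linear_combination x * hEφ
      have hB' : 1 + t * x ≤ B := by rw [htdef]; linarith
      rw [h1]
      exact mul_nonpos_of_nonneg_of_nonpos hφpos.le (by linarith)
    have hdisc : (2 * A x * φ x - B) ^ 2 ≤ B ^ 2 - 4 * A x * C x := by
      nlinarith [key3, hApos]
    have hsq : 2 * A x * φ x - B ≤ Real.sqrt (B ^ 2 - 4 * A x * C x) := by
      calc 2 * A x * φ x - B ≤ |2 * A x * φ x - B| := le_abs_self _
        _ = Real.sqrt ((2 * A x * φ x - B) ^ 2) := (Real.sqrt_sq_eq_abs _).symm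
        _ ≤ Real.sqrt (B ^ 2 - 4 * A x * C x) := Real.sqrt_le_sqrt hdisc
    rw [le_div_iff₀ (by positivity : (0:ℝ) < 2 * A x)]
    nlinarith [hsq]
end

section
/- Let α < 0 and φ(x) = (e^{-αx}-1)/(-α). For all x > 0, φ(x)² - x(3+αx)φ(x) + 2x² ≥ 0. -/
theorem stmt_17 (α : ℝ) (hα : α < 0)
    (φ : ℝ → ℝ) (hφ : ∀ x, φ x = (Real.exp (-α * x) - 1) / (-α)) :
    ∀ x : ℝ, 0 < x →
      0 ≤ (φ x) ^ 2 - x * (3 + α * x) * φ x + 2 * x ^ 2 := by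
  intro x hx
  have hb : 0 < -α := by linarith
  have hE : 0 < Real.exp (-α * x) := Real.exp_pos _
  have key : 0 ≤ x - (1 + α * x) * φ x := by
    rw [hφ]
    rcases le_or_gt (1 + α * x) 0 with h | h
    · have hφ0 : 0 ≤ (Real.exp (-α * x) - 1) / (-α) := by
        apply div_nonneg _ hb.le
        have := Real.add_one_le_exp (-α * x)
        nlinarith
      nlinarith
    · have h1 : 1 - (-α * x) ≤ (Real.exp (-α * x))⁻¹ := by
        have := Real.add_one_le_exp (-(-α * x))
        rw [Real.exp_neg] at this
        linarith
      have h2 : (1 + α * x) * Real.exp (-α * x) ≤ 1 := by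
        calc (1 + α * x) * Real.exp (-α * x)
            ≤ (Real.exp (-α * x))⁻¹ * Real.exp (-α * x) := by
              apply mul_le_mul_of_nonneg_right _ hE.le; linarith
          _ = 1 := inv_mul_cancel₀ hE.ne'
      have hle : (1 + α * x) * ((Real.exp (-α * x) - 1) / (-α)) ≤ x := by
        rw [mul_div_assoc', div_le_iff₀ hb]
        nlinarith
      linarith
  nlinarith [sq_nonneg (φ x - x), mul_nonneg hx.le key]
end

section
/- Let α < 0 and φ(x) = (e^{-αx}-1)/(-α). For all x > 0, -(1+2αx)φ(x)² + x(5+3αx)φ(x) - 4x² ≥ 0. -/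
theorem stmt_18 (α : ℝ) (hα : α < 0)
    (φ : ℝ → ℝ) (hφ : ∀ x, φ x = (Real.exp (-α * x) - 1) / (-α)) :
    ∀ x : ℝ, 0 < x →
      0 ≤ -(1 + 2 * α * x) * (φ x) ^ 2 + x * (5 + 3 * α * x) * φ x
          - 4 * x ^ 2 := by
  intro x hx
  have ht : 0 < -α * x := mul_pos (neg_pos.mpr hα) hx
  set t : ℝ := -α * x with htdef
  set E : ℝ := Real.exp t with hEdef
  have hEpos : 0 < E := Real.exp_pos t
  have hA : 1 + t ≤ E := by have := Real.add_one_le_exp t; linarith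
  have hB : E * (1 - t) ≤ 1 := by
    have h1 : 1 - t ≤ Real.exp (-t) := by
      have := Real.add_one_le_exp (-t); linarith
    have h2 : E * Real.exp (-t) = 1 := by
      rw [hEdef, ← Real.exp_add]; simp
    nlinarith
  have hC : 2 * t * E ≤ E ^ 2 - 1 := by
    have hs : t < Real.sinh t := Real.self_lt_sinh_iff.mpr ht
    rw [Real.sinh_eq] at hs
    have h2 : E * Real.exp (-t) = 1 := by
      rw [hEdef, ← Real.exp_add]; simp
    nlinarith
  set u : ℝ := E - 1 with hudef
  have key : 0 ≤ -(1 - 2*t) * u^2 + t * (5 - 3*t) * u - 4 * t^2 := by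
    have h1 : 0 ≤ t * (u - t) := mul_nonneg ht.le (by nlinarith)
    have h2 : 0 ≤ (t - (1 - t) * u) * (u - t) := by
      apply mul_nonneg
      · nlinarith
      · nlinarith
    have h3 : 0 ≤ t * (E^2 - 1 - 2*t*E) := mul_nonneg ht.le (by nlinarith)
    nlinarith [h1, h2, h3]
  have hα2 : 0 < α ^ 2 := by nlinarith
  have hmain : α ^ 2 * (-(1 + 2 * α * x) * (φ x) ^ 2 + x * (5 + 3 * α * x) * φ x - 4 * x ^ 2)
      = -(1 - 2*t) * u^2 + t * (5 - 3*t) * u - 4 * t^2 := by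
    have hαne : α ≠ 0 := ne_of_lt hα
    have hαne' : -α ≠ 0 := neg_ne_zero.mpr hαne
    rw [hφ x, hudef, hEdef, htdef, div_pow]
    field_simp
    ring
  nlinarith [mul_nonneg (le_of_lt hα2) (le_of_lt hα2)]
end

section
/- Let α ≥ 0, p > 0, k a nonnegative integer, and f(z) = z^k. Then r ↦ log( ∫_{|z|≤r} |z|^{kp} e^{-α|z|²} dA(z) / ∫_{|z|≤r} e^{-α|z|²} dA(z) ) is concave as a function of log r on (0,∞). -/
open Real MeasureTheory Set Filter
open scoped Topology

noncomputable def Rf (m x : ℝ) : ℝ := ∫ t in (0:ℝ)..1, t ^ m * Real.exp (x * (1 - t))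

lemma contOn_rpow {m : ℝ} (hm : 0 ≤ m) (s : Set ℝ) : ContinuousOn (fun t : ℝ => t ^ m) s :=
  fun t _ => (Real.continuousAt_rpow_const t m (Or.inr hm)).continuousWithinAt

lemma contOn_integrand {m : ℝ} (hm : 0 ≤ m) (x : ℝ) (s : Set ℝ) :
    ContinuousOn (fun t : ℝ => t ^ m * Real.exp (x * (1 - t))) s :=
  (contOn_rpow hm s).mul (Continuous.continuousOn (by fun_prop))

lemma integrable_integrand {m : ℝ} (hm : 0 ≤ m) (x : ℝ) :
    IntervalIntegrable (fun t : ℝ => t ^ m * Real.exp (x * (1 - t))) volume 0 1 :=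
  (contOn_integrand hm x _).intervalIntegrable

-- closed form for Rf 0
lemma Rf_zero_eq {x : ℝ} (hx : x ≠ 0) : Rf 0 x = (Real.exp x - 1) / x := by
  unfold Rf
  have h : ∀ t ∈ uIcc (0:ℝ) 1, t ^ (0:ℝ) * Real.exp (x * (1 - t)) = Real.exp (x * (1 - t)) := by
    intro t _; simp
  rw [intervalIntegral.integral_congr h]
  have hderiv : ∀ t ∈ uIcc (0:ℝ) 1,
      HasDerivAt (fun t : ℝ => -Real.exp (x * (1 - t)) / x) (Real.exp (x * (1 - t))) t := by
    intro t _
    have h1 : HasDerivAt (fun t : ℝ => x * (1 - t)) (-x) t := by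
      simpa using ((hasDerivAt_id t).const_sub 1).const_mul x
    have h2 := (h1.exp.neg.div_const x)
    refine h2.congr_deriv ?_
    field_simp
  rw [intervalIntegral.integral_eq_sub_of_hasDerivAt hderiv
    ((Continuous.continuousOn (by fun_prop)).intervalIntegrable)]
  field_simp
  simp; ring

-- integration by parts identity
lemma Rf_ibp {m : ℝ} (hm : 0 ≤ m) (x : ℝ) : (m + 1) * Rf m x - x * Rf (m+1) x = 1 := by
  have key : ∫ t in (0:ℝ)..1,
      ((m+1) * (t ^ m * Real.exp (x * (1 - t))) - x * (t ^ (m+1) * Real.exp (x * (1 - t))))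
      = 1 := by
    have hderiv : ∀ t ∈ uIcc (0:ℝ) 1,
        HasDerivAt (fun t : ℝ => t ^ (m+1) * Real.exp (x * (1 - t)))
          ((m+1) * (t ^ m * Real.exp (x * (1 - t))) - x * (t ^ (m+1) * Real.exp (x * (1 - t)))) t := by
      intro t _
      have h1 : HasDerivAt (fun t : ℝ => t ^ (m+1)) ((m+1) * t ^ m) t := by
        have := Real.hasDerivAt_rpow_const (x := t) (p := m+1) (Or.inr (by linarith))
        simpa using this
      have h2 : HasDerivAt (fun t : ℝ => Real.exp (x * (1 - t))) (-x * Real.exp (x * (1 - t))) t := by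
        have h1' : HasDerivAt (fun t : ℝ => x * (1 - t)) (-x) t := by
          simpa using ((hasDerivAt_id t).const_sub 1).const_mul x
        simpa [mul_comm] using h1'.exp
      have := h1.mul h2
      refine this.congr_deriv ?_
      ring
    rw [intervalIntegral.integral_eq_sub_of_hasDerivAt hderiv]
    · norm_num [Real.zero_rpow (by linarith : m + 1 ≠ 0)]
    · exact (((integrable_integrand hm x).const_mul _).sub
        ((integrable_integrand (by linarith) x).const_mul _))
  rw [intervalIntegral.integral_sub ((integrable_integrand hm x).const_mul _)
      ((integrable_integrand (by linarith) x).const_mul _),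
    intervalIntegral.integral_const_mul, intervalIntegral.integral_const_mul] at key
  exact key

-- derivative of Rf in x
lemma hasDerivAt_Rf {m : ℝ} (hm : 0 ≤ m) (x₀ : ℝ) :
    HasDerivAt (fun x => Rf m x) (Rf m x₀ - Rf (m+1) x₀) x₀ := by
  have main := intervalIntegral.hasDerivAt_integral_of_dominated_loc_of_deriv_le
    (F := fun (x : ℝ) (t : ℝ) => t ^ m * Real.exp (x * (1 - t)))
    (F' := fun (x : ℝ) (t : ℝ) => t ^ m * ((1 - t) * Real.exp (x * (1 - t))))
    (x₀ := x₀) (a := 0) (b := 1) (bound := fun _ => Real.exp (|x₀| + 1))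
    (μ := volume) (Metric.ball_mem_nhds x₀ one_pos)
    (Filter.Eventually.of_forall fun x =>
      ((contOn_integrand hm x (Set.uIoc (0:ℝ) 1)).aestronglyMeasurable measurableSet_uIoc))
    (integrable_integrand hm x₀)
    (((contOn_rpow hm _).mul (Continuous.continuousOn (by fun_prop))).aestronglyMeasurable
      measurableSet_uIoc)
    ?_ (by apply intervalIntegrable_const) ?_
  · obtain ⟨-, hd⟩ := main
    have : (∫ t in (0:ℝ)..1, t ^ m * ((1 - t) * Real.exp (x₀ * (1 - t))))
        = Rf m x₀ - Rf (m+1) x₀ := by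
      unfold Rf
      rw [← intervalIntegral.integral_sub (integrable_integrand hm x₀)
        (integrable_integrand (by linarith) x₀)]
      apply intervalIntegral.integral_congr
      intro t ht
      rw [uIcc_of_le (by norm_num : (0:ℝ) ≤ 1)] at ht
      show t ^ m * ((1 - t) * Real.exp (x₀ * (1 - t)))
          = t ^ m * Real.exp (x₀ * (1 - t)) - t ^ (m+1) * Real.exp (x₀ * (1 - t))
      rcases eq_or_lt_of_le ht.1 with h | h
      · rw [← h]
        simp [Real.zero_rpow (by linarith : m + 1 ≠ 0)]
      · rw [Real.rpow_add_one (ne_of_gt h)]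
        ring
    rwa [this] at hd
  · -- bound
    apply Filter.Eventually.of_forall
    intro t ht x hx
    rw [uIoc_of_le (by norm_num : (0:ℝ) ≤ 1)] at ht
    have ht0 : 0 < t := ht.1
    have ht1 : t ≤ 1 := ht.2
    have h1 : t ^ m ≤ 1 := Real.rpow_le_one ht0.le ht1 hm
    have h2 : (0:ℝ) ≤ 1 - t := by linarith
    have h3 : 1 - t ≤ 1 := by linarith
    have hxb : |x| ≤ |x₀| + 1 := by
      calc |x| = |x₀ + (x - x₀)| := by ring_nf
        _ ≤ |x₀| + |x - x₀| := abs_add_le _ _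
        _ ≤ |x₀| + 1 := by have := abs_sub_comm x x₀; rw [Metric.mem_ball, Real.dist_eq] at hx; linarith
    have h4 : x * (1 - t) ≤ |x₀| + 1 := by
      calc x * (1 - t) ≤ |x * (1 - t)| := le_abs_self _
        _ = |x| * |1 - t| := abs_mul _ _
        _ ≤ (|x₀| + 1) * 1 := by
            apply mul_le_mul hxb (by rwa [abs_of_nonneg h2]) (abs_nonneg _) (by positivity)
        _ = |x₀| + 1 := mul_one _
    have h5 : Real.exp (x * (1 - t)) ≤ Real.exp (|x₀| + 1) := Real.exp_le_exp.2 h4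
    have hpos : 0 ≤ t ^ m := (Real.rpow_pos_of_pos ht0 m).le
    rw [Real.norm_eq_abs, abs_of_nonneg (by positivity)]
    calc t ^ m * ((1 - t) * Real.exp (x * (1 - t)))
        ≤ 1 * (1 * Real.exp (|x₀| + 1)) := by
          apply mul_le_mul h1 _ (by positivity) (by norm_num)
          apply mul_le_mul h3 h5 (Real.exp_pos _).le (by norm_num)
      _ = Real.exp (|x₀| + 1) := by ring
  · -- differentiability in x
    apply Filter.Eventually.of_forall
    intro t ht x hx
    have h1 : HasDerivAt (fun x : ℝ => x * (1 - t)) (1 - t) x := by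
      simpa using (hasDerivAt_id x).mul_const (1 - t)
    have := h1.exp.const_mul (t ^ m : ℝ)
    refine this.congr_deriv ?_
    ring

lemma Rf_pos {m : ℝ} (hm : 0 ≤ m) (x : ℝ) : 0 < Rf m x := by
  apply intervalIntegral.intervalIntegral_pos_of_pos_on (integrable_integrand hm x)
  · intro t ht
    exact mul_pos (Real.rpow_pos_of_pos ht.1 m) (Real.exp_pos _)
  · norm_num

lemma Rf_lt {m : ℝ} (hm : 0 < m) (x : ℝ) : Rf m x < Rf 0 x := by
  apply intervalIntegral.integral_lt_integral_of_continuousOn_of_le_of_exists_lt one_pos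
    (by simpa using contOn_integrand hm.le x (Icc 0 1))
    (by simpa using contOn_integrand le_rfl x (Icc 0 1))
  · intro t ht
    have h1 : t ^ m ≤ 1 := Real.rpow_le_one ht.1.le ht.2 hm.le
    have : (t:ℝ) ^ (0:ℝ) = 1 := Real.rpow_zero t
    rw [this]
    nlinarith [Real.exp_pos (x * (1 - t))]
  · refine ⟨1/2, by norm_num, ?_⟩
    have h1 : ((1:ℝ)/2) ^ m < 1 := by
      apply Real.rpow_lt_one (by norm_num) (by norm_num) hm
    have : ((1:ℝ)/2) ^ (0:ℝ) = 1 := Real.rpow_zero _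
    rw [this]
    nlinarith [Real.exp_pos (x * (1 - 1/2))]

lemma Rf_ge_one {x : ℝ} (hx : 0 ≤ x) : 1 ≤ Rf 0 x := by
  have : Rf 0 x = ∫ t in (0:ℝ)..1, Real.exp (x * (1 - t)) := by
    unfold Rf
    apply intervalIntegral.integral_congr
    intro t ht
    simp [Real.rpow_zero]
  rw [this]
  calc (1:ℝ) = ∫ t in (0:ℝ)..1, (1:ℝ) := by simp
    _ ≤ _ := by
        apply intervalIntegral.integral_mono_on (by norm_num) (by simp)
          ((Continuous.continuousOn (by fun_prop)).intervalIntegrable)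
        intro t ht
        have : 0 ≤ x * (1 - t) := mul_nonneg hx (by linarith [ht.2])
        simpa using Real.one_le_exp this

lemma Rf_at_zero {m : ℝ} (hm : 0 ≤ m) : Rf m 0 = 1 / (m + 1) := by
  unfold Rf
  have : ∀ t ∈ uIcc (0:ℝ) 1, t ^ m * Real.exp (0 * (1 - t)) = t ^ m := by
    intro t _; simp
  rw [intervalIntegral.integral_congr this, integral_rpow (Or.inl (by linarith : (-1:ℝ) < m))]
  rw [Real.one_rpow, Real.zero_rpow (by linarith : m + 1 ≠ 0)]
  ring

noncomputable def aF (m x : ℝ) : ℝ := (Rf m x)⁻¹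
noncomputable def da (m x : ℝ) : ℝ := (Rf (m+1) x - Rf m x) / (Rf m x) ^ 2
noncomputable def EE (m x : ℝ) : ℝ :=
  aF m x * ((m+1) - x - aF m x) - aF 0 x * (1 - x - aF 0 x)
noncomputable def DD (m x : ℝ) : ℝ := aF m x - aF 0 x
noncomputable def dE (m x : ℝ) : ℝ :=
  (da m x * ((m+1) - x - aF m x) + aF m x * (-1 - da m x))
  - (da 0 x * (1 - x - aF 0 x) + aF 0 x * (-1 - da 0 x))

lemma aF_pos {m : ℝ} (hm : 0 ≤ m) (x : ℝ) : 0 < aF m x := inv_pos.2 (Rf_pos hm x)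

lemma hasDerivAt_aF {m : ℝ} (hm : 0 ≤ m) (x : ℝ) : HasDerivAt (aF m) (da m x) x := by
  have h := (hasDerivAt_Rf hm x).inv (ne_of_gt (Rf_pos hm x))
  refine h.congr_deriv ?_
  unfold da
  ring

-- Riccati identity, valid for all x
lemma ric {m : ℝ} (hm : 0 ≤ m) (x : ℝ) :
    x * da m x = aF m x * ((m+1) - x - aF m x) := by
  have hR := Rf_pos hm x
  have hibp := Rf_ibp hm x
  unfold da aF
  have hR' : Rf m x ≠ 0 := ne_of_gt hR
  have h2 : (Rf m x)⁻¹ * ((m+1) - x - (Rf m x)⁻¹) = (((m+1) - x) * Rf m x - 1) / (Rf m x)^2 := by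
    rw [eq_div_iff (pow_ne_zero 2 hR')]
    have hc : (Rf m x)⁻¹ * Rf m x = 1 := inv_mul_cancel₀ hR'
    calc (Rf m x)⁻¹ * ((m+1) - x - (Rf m x)⁻¹) * (Rf m x)^2
        = ((m+1) - x)*((Rf m x)⁻¹*Rf m x)*Rf m x - ((Rf m x)⁻¹*Rf m x)^2 := by ring
      _ = ((m + 1 - x) * Rf m x - 1) := by rw [hc]; ring
  rw [h2, mul_div_assoc', div_eq_div_iff (pow_ne_zero 2 hR') (pow_ne_zero 2 hR')]
  linear_combination (-(Rf m x)^2) * hibp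

lemma hasDerivAt_EE {m : ℝ} (hm : 0 ≤ m) (x : ℝ) : HasDerivAt (EE m) (dE m x) x := by
  have ha := hasDerivAt_aF hm x
  have hb := hasDerivAt_aF le_rfl x
  have h1 : HasDerivAt (fun x => (m+1) - x - aF m x) (-1 - da m x) x := by
    exact ((hasDerivAt_id x).const_sub ((m:ℝ)+1)).sub ha
  have h2 : HasDerivAt (fun x => 1 - x - aF 0 x) (-1 - da 0 x) x := by
    exact ((hasDerivAt_id x).const_sub (1:ℝ)).sub hb
  exact (ha.mul h1).sub (hb.mul h2)

lemma hasDerivAt_DD {m : ℝ} (hm : 0 ≤ m) (x : ℝ) :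
    HasDerivAt (DD m) (da m x - da 0 x) x :=
  (hasDerivAt_aF hm x).sub (hasDerivAt_aF le_rfl x)

lemma DD_deriv_eq {m : ℝ} (hm : 0 ≤ m) {x : ℝ} (hx : x ≠ 0) :
    da m x - da 0 x = EE m x / x := by
  have h1 := ric hm x
  have h2 := ric le_rfl x
  norm_num at h2
  unfold EE
  field_simp
  linear_combination h1 - h2

lemma cont_EE {m : ℝ} (hm : 0 ≤ m) : Continuous (EE m) :=
  continuous_iff_continuousAt.2 fun x => (hasDerivAt_EE hm x).continuousAt

-- bounds for x > 0
lemma b_le_one {x : ℝ} (hx : 0 ≤ x) : aF 0 x ≤ 1 := by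
  unfold aF
  have := Rf_ge_one hx
  have hpos := Rf_pos le_rfl x
  rw [inv_le_one_iff₀]
  right; exact this

lemma Q_neg {x : ℝ} (hx : 0 < x) : 1 - x - aF 0 x < 0 := by
  have hb : aF 0 x = x / (Real.exp x - 1) := by
    unfold aF
    rw [Rf_zero_eq (ne_of_gt hx)]
    rw [inv_div]
  have he : 1 < Real.exp x := by
    have := Real.add_one_lt_exp (ne_of_gt hx); linarith
  have h1 : 1 - x < Real.exp (-x) := by
    have := Real.add_one_lt_exp (neg_ne_zero.2 (ne_of_gt hx)); linarith
  have h2 : Real.exp (-x) * Real.exp x = 1 := by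
    rw [← Real.exp_add]; simp
  have h3 : 1 - x < x / (Real.exp x - 1) := by
    rw [lt_div_iff₀ (by linarith)]
    nlinarith [Real.exp_pos x]
  rw [hb]; linarith

lemma negc_le {x : ℝ} (hx : 0 < x) : aF 0 x * (x + aF 0 x - 1) ≤ x := by
  have hb1 := b_le_one hx.le
  have hb0 := aF_pos le_rfl x
  nlinarith

lemma DD_pos {m : ℝ} (hm : 0 < m) (x : ℝ) : 0 < DD m x := by
  unfold DD aF
  have h1 := Rf_lt hm x
  have h2 := Rf_pos hm.le x
  have h3 := Rf_pos le_rfl x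
  exact sub_pos.2 (by exact inv_strictAnti₀ h2 h1)

lemma aF_at_zero {m : ℝ} (hm : 0 ≤ m) : aF m 0 = m + 1 := by
  unfold aF
  rw [Rf_at_zero hm]
  rw [one_div, inv_inv]

lemma da_at_zero {m : ℝ} (hm : 0 ≤ m) : da m 0 = -(m+1)/(m+2) := by
  unfold da
  rw [Rf_at_zero hm, Rf_at_zero (by linarith)]
  have h1 : m + 1 ≠ 0 := by linarith
  have h2 : m + 2 ≠ 0 := by linarith
  field_simp
  ring

lemma EE_at_zero {m : ℝ} (hm : 0 ≤ m) : EE m 0 = 0 := by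
  unfold EE
  rw [aF_at_zero hm, aF_at_zero le_rfl]
  ring

lemma dE_at_zero {m : ℝ} (hm : 0 < m) : dE m 0 < 0 := by
  unfold dE
  rw [aF_at_zero hm.le, aF_at_zero le_rfl, da_at_zero hm.le, da_at_zero le_rfl]
  have h2 : (0:ℝ) < m + 2 := by linarith
  have h1 : -(m+1)/(m+2) + 1/2 < 0 := by
    rw [div_add_div _ _ (ne_of_gt h2) (two_ne_zero), div_neg_iff]
    right
    constructor
    · linarith
    · linarith
  calc -(m + 1) / (m + 2) * ((m+1) - 0 - (m + 1)) + (m + 1) * (-1 - -(m + 1) / (m + 2)) -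
      (-(0 + 1) / (0 + 2) * (1 - 0 - (0 + 1)) + (0 + 1) * (-1 - -(0 + 1) / (0 + 2)))
      = -(m+1)/(m+2) + 1/2 := by field_simp; ring
    _ < 0 := h1

-- at a point where EE m x₁ = 0 and x₁ > 0 and DD m x₁ < m, we get dE m x₁ < 0
lemma dE_neg_at_zero_of {m : ℝ} (hm : 0 < m) {x₁ : ℝ} (hx₁ : 0 < x₁)
    (hE : EE m x₁ = 0) (hD : DD m x₁ < m) : dE m x₁ < 0 := by
  set a := aF m x₁ with ha
  set b := aF 0 x₁ with hb
  set c := b * (1 - x₁ - b) with hc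
  have hric_a : x₁ * da m x₁ = a * ((m+1) - x₁ - a) := ric hm.le x₁
  have hric_b : x₁ * da 0 x₁ = b * ((0+1) - x₁ - b) := ric le_rfl x₁
  have hEE : a * ((m+1) - x₁ - a) - b * (1 - x₁ - b) = 0 := hE
  have hda : da m x₁ = c / x₁ := by
    rw [eq_div_iff (ne_of_gt hx₁), hc]
    linear_combination hric_a + hEE
  have hdb : da 0 x₁ = c / x₁ := by
    rw [eq_div_iff (ne_of_gt hx₁), hc]
    linear_combination hric_b
  set d := DD m x₁ with hd
  have hdab : d = a - b := rfl
  have hcneg : c < 0 := by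
    have := Q_neg hx₁
    have hb0 : 0 < b := aF_pos le_rfl x₁
    rw [hc]
    exact mul_neg_of_pos_of_neg hb0 this
  have hcx : -c ≤ x₁ := by
    have := negc_le hx₁
    rw [hc]
    nlinarith
  have hdpos : 0 < d := DD_pos hm x₁
  -- dE = (c/x₁)*(m - 2d) - d
  have hdE : dE m x₁ = (c/x₁) * (m - 2*d) - d := by
    unfold dE
    rw [hda, hdb, ← ha, ← hb, hdab]
    ring
  have hDm : d < m := hD
  set X := c / x₁ with hX
  have hX1 : -1 ≤ X := by
    rw [hX, le_div_iff₀ hx₁]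
    linarith
  have hX0 : X < 0 := div_neg_of_neg_of_pos hcneg hx₁
  rw [hdE]
  nlinarith [mul_nonneg (by linarith : (0:ℝ) ≤ X + 1) hdpos.le,
    mul_pos (neg_pos.2 hX0) (by linarith : 0 < m - d)]

lemma EE_neg {m : ℝ} (hm : 0 < m) : ∀ x : ℝ, 0 < x → EE m x < 0 := by
  by_contra hcon
  push_neg at hcon
  obtain ⟨x₀, hx₀pos, hx₀⟩ := hcon
  have contD : Continuous (DD m) :=
    continuous_iff_continuousAt.2 fun x => (hasDerivAt_DD hm.le x).continuousAt
  -- EE m < 0 near 0⁺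
  have hslope : Filter.Tendsto (slope (EE m) 0) (𝓝[≠] (0:ℝ)) (𝓝 (dE m 0)) :=
    hasDerivAt_iff_tendsto_slope.1 (hasDerivAt_EE hm.le 0)
  have hneg : ∀ᶠ y in 𝓝[>] (0:ℝ), EE m y < 0 := by
    have h1 : Filter.Tendsto (slope (EE m) 0) (𝓝[>] (0:ℝ)) (𝓝 (dE m 0)) :=
      hslope.mono_left (nhdsWithin_mono _ (fun y hy => ne_of_gt hy))
    have h2 : ∀ᶠ y in 𝓝[>] (0:ℝ), slope (EE m) 0 y < 0 :=
      h1.eventually (Iio_mem_nhds (dE_at_zero hm))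
    filter_upwards [h2, self_mem_nhdsWithin] with y hy hy0
    rw [slope_def_field, EE_at_zero hm.le, sub_zero, sub_zero] at hy
    have hy0' : (0:ℝ) < y := hy0
    have := (div_neg_iff).1 hy
    rcases this with ⟨h, h'⟩ | ⟨h, h'⟩
    · linarith
    · exact h
  obtain ⟨δ, hδ, hsub⟩ := mem_nhdsGT_iff_exists_Ioo_subset.1 hneg
  have hδpos : (0:ℝ) < δ := hδ
  set T : Set ℝ := Ici δ ∩ {x | 0 ≤ EE m x} with hT
  have hx₀T : x₀ ∈ T := by
    constructor
    · by_contra hlt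
      have hlt' : x₀ < δ := by
        simp only [mem_Ici, not_le] at hlt
        exact hlt
      exact absurd (hsub ⟨hx₀pos, hlt'⟩) (not_lt.2 hx₀)
    · exact hx₀
  have hTclosed : IsClosed T := isClosed_Ici.inter (isClosed_le continuous_const (cont_EE hm.le))
  have hbdd : BddBelow T := ⟨δ, fun x hx => hx.1⟩
  set x₁ := sInf T with hx₁def
  have hx₁T : x₁ ∈ T := hTclosed.csInf_mem ⟨x₀, hx₀T⟩ hbdd
  have hx₁δ : δ ≤ x₁ := hx₁T.1
  have hx₁pos : 0 < x₁ := lt_of_lt_of_le hδpos hx₁δ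
  have hlt : ∀ y, 0 < y → y < x₁ → EE m y < 0 := by
    intro y hy0 hyx
    by_contra hy
    push_neg at hy
    rcases lt_or_ge y δ with h | h
    · exact absurd (hsub ⟨hy0, h⟩) (not_lt.2 hy)
    · exact absurd (csInf_le hbdd (⟨h, hy⟩ : y ∈ T)) (not_le.2 hyx)
  have hE₁le : EE m x₁ ≤ 0 := by
    have htend : Filter.Tendsto (EE m) (𝓝[<] x₁) (𝓝 (EE m x₁)) :=
      ((cont_EE hm.le).continuousAt).continuousWithinAt
    apply le_of_tendsto htend
    filter_upwards [Ioo_mem_nhdsLT_of_mem (⟨hx₁pos, le_refl x₁⟩ : x₁ ∈ Ioc 0 x₁)] with y hy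
    exact (hlt y hy.1 hy.2).le
  have hE₁ : EE m x₁ = 0 := le_antisymm hE₁le hx₁T.2
  have hdE₁ : 0 ≤ dE m x₁ := by
    have hs := hasDerivAt_iff_tendsto_slope.1 (hasDerivAt_EE hm.le x₁)
    have hs' : Filter.Tendsto (slope (EE m) x₁) (𝓝[<] x₁) (𝓝 (dE m x₁)) :=
      hs.mono_left (nhdsWithin_mono _ (fun y hy => ne_of_lt hy))
    apply ge_of_tendsto hs'
    filter_upwards [Ioo_mem_nhdsLT_of_mem (⟨hx₁pos, le_refl x₁⟩ : x₁ ∈ Ioc 0 x₁)] with y hy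
    rw [slope_def_field, hE₁, sub_zero]
    have h1 : EE m y < 0 := hlt y hy.1 hy.2
    have h2 : y - x₁ < 0 := by linarith [hy.2]
    exact (div_pos_iff.2 (Or.inr ⟨h1, h2⟩)).le
  have hDlt : DD m x₁ < m := by
    have hstrict : StrictAntiOn (DD m) (Icc 0 x₁) := by
      apply strictAntiOn_of_deriv_neg (convex_Icc 0 x₁) contD.continuousOn
      intro y hy
      rw [interior_Icc] at hy
      rw [(hasDerivAt_DD hm.le y).deriv, DD_deriv_eq hm.le (ne_of_gt hy.1)]
      exact div_neg_of_neg_of_pos (hlt y hy.1 hy.2) hy.1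
    have h1 : DD m x₁ < DD m 0 :=
      hstrict ⟨le_rfl, hx₁pos.le⟩ ⟨hx₁pos.le, le_rfl⟩ hx₁pos
    have h2 : DD m 0 = m := by
      unfold DD
      rw [aF_at_zero hm.le, aF_at_zero le_rfl]
      ring
    linarith
  exact absurd (dE_neg_at_zero_of hm hx₁pos hE₁ hDlt) (not_lt.2 hdE₁)

lemma DD_strictAnti {m : ℝ} (hm : 0 < m) : StrictAntiOn (DD m) (Ici 0) := by
  have contD : Continuous (DD m) :=
    continuous_iff_continuousAt.2 fun x => (hasDerivAt_DD hm.le x).continuousAt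
  apply strictAntiOn_of_deriv_neg (convex_Ici 0) contD.continuousOn
  intro y hy
  rw [interior_Ici] at hy
  rw [(hasDerivAt_DD hm.le y).deriv, DD_deriv_eq hm.le (ne_of_gt hy)]
  exact div_neg_of_neg_of_pos (EE_neg hm y hy) hy

lemma xRd {m : ℝ} (hm : 0 ≤ m) (x : ℝ) :
    x * ((Rf m x - Rf (m+1) x) / Rf m x) = x - (m+1) + aF m x := by
  have h := Rf_ibp hm x
  have hR : Rf m x ≠ 0 := ne_of_gt (Rf_pos hm x)
  unfold aF
  field_simp
  linear_combination h

noncomputable def GG (m α t : ℝ) : ℝ :=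
  2*m*t + Real.log (Rf m (α * Real.exp (2*t))) - Real.log (Rf 0 (α * Real.exp (2*t)))

lemma hasDerivAt_GG {m : ℝ} (hm : 0 < m) (α : ℝ) (t : ℝ) :
    HasDerivAt (GG m α) (2 * DD m (α * Real.exp (2*t))) t := by
  set x := α * Real.exp (2*t) with hxdef
  have hx : HasDerivAt (fun t : ℝ => α * Real.exp (2*t)) (2*x) t := by
    have h1 : HasDerivAt (fun t : ℝ => 2*t) (2:ℝ) t := by
      simpa using (hasDerivAt_id t).const_mul (2:ℝ)
    have := (h1.exp).const_mul α
    refine this.congr_deriv ?_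
    rw [hxdef]; ring
  have hlog1 : HasDerivAt (fun y => Real.log (Rf m y)) ((Rf m x - Rf (m+1) x)/Rf m x) x :=
    (hasDerivAt_Rf hm.le x).log (ne_of_gt (Rf_pos hm.le x))
  have hlog0 : HasDerivAt (fun y => Real.log (Rf 0 y)) ((Rf 0 x - Rf (0+1) x)/Rf 0 x) x :=
    (hasDerivAt_Rf le_rfl x).log (ne_of_gt (Rf_pos le_rfl x))
  have hc1 := hlog1.comp t hx
  have hc0 := hlog0.comp t hx
  have haff : HasDerivAt (fun t : ℝ => 2*m*t) (2*m) t := by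
    simpa using (hasDerivAt_id t).const_mul (2*m)
  have hsum := (haff.add hc1).sub hc0
  have heq : 2*m + (Rf m x - Rf (m+1) x)/Rf m x * (2*x) - (Rf 0 x - Rf (0+1) x)/Rf 0 x * (2*x)
      = 2 * DD m x := by
    have hA := xRd hm.le x
    have hB := xRd le_rfl x
    unfold DD
    have h0 : (0:ℝ) + 1 = 1 := by norm_num
    rw [h0] at hB
    rw [h0]
    unfold aF at hA hB ⊢
    linear_combination 2*hA - 2*hB
  rw [← heq]
  exact hsum

lemma concave_GG {m : ℝ} (hm : 0 < m) {α : ℝ} (hα : 0 ≤ α) :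
    ConcaveOn ℝ Set.univ (GG m α) := by
  apply AntitoneOn.concaveOn_of_deriv convex_univ
  · exact (Continuous.continuousOn (continuous_iff_continuousAt.2
      fun t => (hasDerivAt_GG hm α t).continuousAt))
  · intro t _
    exact (hasDerivAt_GG hm α t).differentiableAt.differentiableWithinAt
  · rw [interior_univ]
    intro s _ t _ hst
    rw [(hasDerivAt_GG hm α s).deriv, (hasDerivAt_GG hm α t).deriv]
    have hxs : (0:ℝ) ≤ α * Real.exp (2*s) := mul_nonneg hα (Real.exp_pos _).le
    have hxt : (0:ℝ) ≤ α * Real.exp (2*t) := mul_nonneg hα (Real.exp_pos _).le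
    have hle : α * Real.exp (2*s) ≤ α * Real.exp (2*t) :=
      mul_le_mul_of_nonneg_left (Real.exp_le_exp.2 (by linarith)) hα
    rcases eq_or_lt_of_le hle with h | h
    · rw [h]
    · exact (mul_le_mul_iff_right₀ two_pos).2 (DD_strictAnti hm hxs hxt h).le

lemma ball_to_radial (q α r : ℝ) (hr : 0 < r) :
    (∫ z in Metric.closedBall (0:ℂ) r, ‖z‖ ^ q * Real.exp (-α * ‖z‖ ^ 2))
      = (2 * (volume (Metric.ball (0:ℂ) 1)).toReal)
        * ∫ y in (0:ℝ)..r, y * (y ^ q * Real.exp (-α * y^2)) := by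
  set h : ℝ → ℝ := fun y => y ^ q * Real.exp (-α * y^2) with hh
  set f : ℝ → ℝ := (Iic r).indicator h with hf
  have h1 : (∫ z in Metric.closedBall (0:ℂ) r,
      ‖z‖ ^ q * Real.exp (-α * ‖z‖ ^ 2)) = ∫ z : ℂ, f ‖z‖ := by
    rw [← integral_indicator (measurableSet_closedBall)]
    congr 1
    funext z
    have habs : ‖z‖ = ‖z‖ := rfl
    rw [hf]
    by_cases hz : ‖z‖ ≤ r
    · rw [Set.indicator_of_mem (Metric.mem_closedBall.2 (by simpa [dist_zero_right] using hz)),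
        Set.indicator_of_mem (by exact hz : ‖z‖ ∈ Iic r)]
    · rw [Set.indicator_of_notMem (by simpa [Metric.mem_closedBall, dist_zero_right] using hz),
        Set.indicator_of_notMem (by exact hz : ‖z‖ ∉ Iic r)]
  rw [h1, MeasureTheory.integral_fun_norm_addHaar volume f, Complex.finrank_real_complex]
  have h2 : ∀ y : ℝ, y ^ (2 - 1) • f y = y * f y := by
    intro y; norm_num
  rw [show (∫ y in Ioi (0:ℝ), y ^ (2-1) • f y) = ∫ y in Ioi (0:ℝ), y * f y from
    integral_congr_ae (Filter.Eventually.of_forall fun y => h2 y)]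
  have h3 : (∫ y in Ioi (0:ℝ), y * f y) = ∫ y in (0:ℝ)..r, y * h y := by
    have : ∀ y : ℝ, y * f y = (Iic r).indicator (fun y => y * h y) y := by
      intro y
      rw [hf]
      by_cases hy : y ∈ Iic r
      · rw [Set.indicator_of_mem hy, Set.indicator_of_mem hy]
      · rw [Set.indicator_of_notMem hy, Set.indicator_of_notMem hy, mul_zero]
    rw [integral_congr_ae (Filter.Eventually.of_forall fun y => this y),
      MeasureTheory.setIntegral_indicator measurableSet_Iic, Set.Ioi_inter_Iic,
      intervalIntegral.integral_of_le hr.le]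
  rw [h3]
  simp only [nsmul_eq_mul, smul_eq_mul, Measure.real]
  ring

lemma radial_subst {q α r : ℝ} (hq : 0 ≤ q) (hr : 0 < r) :
    (∫ y in (0:ℝ)..r, y * (y ^ q * Real.exp (-α * y^2)))
      = (1/2) * ∫ u in (0:ℝ)..r^2, u ^ (q/2) * Real.exp (-α * u) := by
  have key := intervalIntegral.integral_comp_smul_deriv''
    (f := fun y : ℝ => y^2) (f' := fun y : ℝ => 2*y)
    (g := fun u : ℝ => u ^ (q/2) * Real.exp (-α * u)) (a := 0) (b := r)
    (by fun_prop)
    (fun x hx => by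
      have : HasDerivAt (fun y : ℝ => y^2) (2*x) x := by
        simpa [mul_comm] using hasDerivAt_pow 2 x
      exact this.hasDerivWithinAt)
    (by fun_prop)
    (by
      apply ContinuousOn.mul
      · apply (contOn_rpow (by positivity) _)
      · fun_prop)
  rw [show ((0:ℝ))^2 = 0 by norm_num] at key
  rw [← key]
  rw [← intervalIntegral.integral_const_mul]
  apply intervalIntegral.integral_congr
  intro y hy
  rw [uIcc_of_le hr.le] at hy
  have hy0 : 0 ≤ y := hy.1
  have hsq : ((y^2 : ℝ)) ^ (q/2) = y ^ q := by
    rw [← Real.rpow_natCast y 2, ← Real.rpow_mul hy0]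
    rw [show ((2:ℕ):ℝ) * (q/2) = q by push_cast; ring]
  simp only [smul_eq_mul, Function.comp]
  rw [hsq]
  ring

lemma scale_int {m α y₀ : ℝ} (hm : 0 ≤ m) (hy : 0 < y₀) :
    (∫ u in (0:ℝ)..y₀, u ^ m * Real.exp (-α * u))
      = y₀ ^ (m+1) * Real.exp (-(α*y₀)) * Rf m (α*y₀) := by
  have key := intervalIntegral.smul_integral_comp_mul_left
    (fun u : ℝ => u ^ m * Real.exp (-α * u)) y₀ (a := 0) (b := 1)
  rw [mul_zero, mul_one] at key
  rw [← key, smul_eq_mul]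
  have hinner : (∫ t in (0:ℝ)..1, (y₀ * t) ^ m * Real.exp (-α * (y₀ * t)))
      = (y₀ ^ m * Real.exp (-(α*y₀))) * Rf m (α*y₀) := by
    unfold Rf
    rw [← intervalIntegral.integral_const_mul]
    apply intervalIntegral.integral_congr
    intro t ht
    rw [uIcc_of_le (by norm_num : (0:ℝ) ≤ 1)] at ht
    show (y₀ * t) ^ m * Real.exp (-α * (y₀ * t))
        = y₀ ^ m * Real.exp (-(α * y₀)) * (t ^ m * Real.exp (α * y₀ * (1 - t)))
    rw [Real.mul_rpow hy.le ht.1,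
      show -α * (y₀ * t) = -(α*y₀) + α*y₀*(1-t) by ring, Real.exp_add]
    ring
  rw [hinner, Real.rpow_add_one (ne_of_gt hy)]
  ring

lemma log_ratio {q α : ℝ} (hq : 0 < q) (hα : 0 ≤ α) (t : ℝ) :
    Real.log
      ((∫ z in Metric.closedBall (0:ℂ) (Real.exp t),
          ‖z‖ ^ q * Real.exp (-α * ‖z‖ ^ 2)) /
       (∫ z in Metric.closedBall (0:ℂ) (Real.exp t),
          Real.exp (-α * ‖z‖ ^ 2)))
    = GG (q/2) α t := by
  set r := Real.exp t with hrdef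
  have hr : 0 < r := Real.exp_pos t
  set y₀ := r^2 with hy₀def
  have hy₀ : 0 < y₀ := by positivity
  have hy₀exp : y₀ = Real.exp (2*t) := by
    rw [hy₀def, hrdef, pow_two, ← Real.exp_add, two_mul]
  set V := (volume (Metric.ball (0:ℂ) 1)).toReal with hVdef
  have hV : 0 < V := by
    rw [hVdef]
    exact ENNReal.toReal_pos (ne_of_gt (Metric.measure_ball_pos volume _ one_pos))
      (measure_ball_lt_top).ne
  set x := α * y₀ with hxdef
  have hnum : (∫ z in Metric.closedBall (0:ℂ) r,
      ‖z‖ ^ q * Real.exp (-α * ‖z‖ ^ 2))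
      = V * (y₀ ^ (q/2+1) * Real.exp (-(α*y₀)) * Rf (q/2) (α*y₀)) := by
    rw [ball_to_radial q α r hr, radial_subst hq.le hr, ← hy₀def,
      scale_int (by positivity : (0:ℝ) ≤ q/2) hy₀]
    ring
  have hden : (∫ z in Metric.closedBall (0:ℂ) r, Real.exp (-α * ‖z‖ ^ 2))
      = V * (y₀ * Real.exp (-(α*y₀)) * Rf 0 (α*y₀)) := by
    have h0 : (∫ z in Metric.closedBall (0:ℂ) r, Real.exp (-α * ‖z‖ ^ 2))
        = ∫ z in Metric.closedBall (0:ℂ) r,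
            ‖z‖ ^ (0:ℝ) * Real.exp (-α * ‖z‖ ^ 2) := by
      congr 1
      funext z
      rw [Real.rpow_zero, one_mul]
    rw [h0, ball_to_radial 0 α r hr, radial_subst le_rfl hr, ← hy₀def,
      show ((0:ℝ)/2) = 0 by norm_num, scale_int le_rfl hy₀,
      show ((0:ℝ)+1) = 1 by norm_num, Real.rpow_one]
    ring
  have hRq := Rf_pos (by positivity : (0:ℝ) ≤ q/2) x
  have hR0 := Rf_pos le_rfl x
  have hy₀q : (0:ℝ) < y₀ ^ (q/2) := Real.rpow_pos_of_pos hy₀ _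
  have hsimp : (∫ z in Metric.closedBall (0:ℂ) r,
        ‖z‖ ^ q * Real.exp (-α * ‖z‖ ^ 2)) /
      (∫ z in Metric.closedBall (0:ℂ) r, Real.exp (-α * ‖z‖ ^ 2))
      = y₀ ^ (q/2) * (Rf (q/2) x / Rf 0 x) := by
    rw [hnum, hden, ← hxdef,
      show y₀ ^ (q/2+1) = y₀ ^ (q/2) * y₀ from Real.rpow_add_one (ne_of_gt hy₀) _]
    have hexp := Real.exp_pos (-(α*y₀))
    field_simp
  rw [hsimp, Real.log_mul (ne_of_gt hy₀q) (ne_of_gt (by positivity)),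
    Real.log_div (ne_of_gt hRq) (ne_of_gt hR0), Real.log_rpow hy₀, hy₀exp, Real.log_exp]
  unfold GG
  rw [← hy₀exp, ← hxdef]
  ring

theorem stmt_19 (α : ℝ) (hα : 0 ≤ α) (p : ℝ) (hp : 0 < p) (k : ℕ) :
    ConcaveOn ℝ Set.univ (fun t : ℝ =>
      Real.log
        ((∫ z in Metric.closedBall (0:ℂ) (Real.exp t),
            ‖z‖ ^ ((k : ℝ) * p) * Real.exp (-α * ‖z‖ ^ 2)) /
         (∫ z in Metric.closedBall (0:ℂ) (Real.exp t),
            Real.exp (-α * ‖z‖ ^ 2)))) := by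
  rcases Nat.eq_zero_or_pos k with hk | hk
  · subst hk
    have heq : (fun t : ℝ =>
        Real.log
          ((∫ z in Metric.closedBall (0:ℂ) (Real.exp t),
              ‖z‖ ^ (((0:ℕ) : ℝ) * p) * Real.exp (-α * ‖z‖ ^ 2)) /
           (∫ z in Metric.closedBall (0:ℂ) (Real.exp t),
              Real.exp (-α * ‖z‖ ^ 2)))) = fun _ : ℝ => (0:ℝ) := by
      funext t
      have h1 : (∫ z in Metric.closedBall (0:ℂ) (Real.exp t),
          ‖z‖ ^ (((0:ℕ) : ℝ) * p) * Real.exp (-α * ‖z‖ ^ 2))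
          = ∫ z in Metric.closedBall (0:ℂ) (Real.exp t),
              Real.exp (-α * ‖z‖ ^ 2) := by
        congr 1
        funext z
        rw [Nat.cast_zero, zero_mul, Real.rpow_zero, one_mul]
      rw [h1]
      rcases eq_or_ne (∫ z in Metric.closedBall (0:ℂ) (Real.exp t),
          Real.exp (-α * ‖z‖ ^ 2)) 0 with h | h
      · rw [h, div_zero, Real.log_zero]
      · rw [div_self h, Real.log_one]
    rw [heq]
    exact concaveOn_const 0 convex_univ
  · have hq : 0 < (k:ℝ)*p := mul_pos (by exact_mod_cast hk) hp
    have heq : (fun t : ℝ =>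
        Real.log
          ((∫ z in Metric.closedBall (0:ℂ) (Real.exp t),
              ‖z‖ ^ ((k : ℝ) * p) * Real.exp (-α * ‖z‖ ^ 2)) /
           (∫ z in Metric.closedBall (0:ℂ) (Real.exp t),
              Real.exp (-α * ‖z‖ ^ 2))))
        = fun t : ℝ => GG ((k:ℝ)*p/2) α t := funext fun t => log_ratio hq hα t
    rw [heq]
    exact concave_GG (by positivity) hα
end
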